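/- arXiv:1705.01867 — 5 statements merged into one kernel-verified Lean document; each statement's English description precedes it below -/
import Mathlib

section
/- Let δ > 0, let ν ∈ ℝ^d be a unit vector, and let h > 0. Then the image under Φ_δ of the half-space H_{ν,h} = {x ∈ ℝ^d : ⟨x, ν⟩ ≤ h} equals the intersection of the open ball of radius δ^{-1/2} centered at the origin with the closed ball of radius √(1/(4δ²h²) + 1/δ) centered at the point −(1/(2δh))·ν. -/
open scoped RealInnerProductSpace

/-- For `δ > 0`, `φ_δ(r) = 2 / (1 + √(1 + 4δr²))`, the unique positive root of
`φ + δr²φ² = 1`. -/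
noncomputable def phi (δ r : ℝ) : ℝ := 2 / (1 + Real.sqrt (1 + 4 * δ * r ^ 2))

/-- The map `Φ_δ : ℝ^d → ℝ^d`, `Φ_δ(x) = φ_δ(|x|) • x`. -/
noncomputable def Phi (δ : ℝ) {d : ℕ} (x : EuclideanSpace ℝ (Fin d)) :
    EuclideanSpace ℝ (Fin d) := phi δ ‖x‖ • x

lemma phi_pos (δ r : ℝ) : 0 < phi δ r := by
  unfold phi
  have := Real.sqrt_nonneg (1 + 4 * δ * r ^ 2)
  positivity

lemma phi_root (δ r : ℝ) (hδ : 0 < δ) : phi δ r + δ * r ^ 2 * (phi δ r) ^ 2 = 1 := by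
  unfold phi
  have h0 : (0:ℝ) ≤ 1 + 4 * δ * r ^ 2 := by positivity
  have hs := Real.sq_sqrt h0
  have hs0 := Real.sqrt_nonneg (1 + 4 * δ * r ^ 2)
  set s := Real.sqrt (1 + 4 * δ * r ^ 2) with hsdef
  have h1 : (0:ℝ) < 1 + s := by linarith
  field_simp
  nlinarith [hs]

lemma phi_unique (δ r t : ℝ) (hδ : 0 < δ) (ht : 0 < t)
    (h : t + δ * r ^ 2 * t ^ 2 = 1) : t = phi δ r := by
  have hp := phi_pos δ r
  have hr := phi_root δ r hδ
  have hnn : 0 ≤ δ * r ^ 2 * (t + phi δ r) :=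
    mul_nonneg (mul_nonneg hδ.le (sq_nonneg r)) (by linarith)
  have hfac : (t - phi δ r) * (1 + δ * r ^ 2 * (t + phi δ r)) = 0 := by nlinarith
  have hpos : (0:ℝ) < 1 + δ * r ^ 2 * (t + phi δ r) := by linarith
  have := mul_eq_zero.mp hfac
  rcases this with h1 | h1
  · linarith
  · linarith

/-- Membership in the intersection of the two balls, rephrased algebraically. -/
lemma mem_balls_iff (d : ℕ) (δ h : ℝ) (hδ : 0 < δ) (hh : 0 < h)
    (ν y : EuclideanSpace ℝ (Fin d)) (hν : ‖ν‖ = 1) :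
    (y ∈ Metric.ball (0 : EuclideanSpace ℝ (Fin d)) ((Real.sqrt δ)⁻¹) ∩
        Metric.closedBall (-(1 / (2 * δ * h)) • ν)
          (Real.sqrt (1 / (4 * δ ^ 2 * h ^ 2) + 1 / δ))) ↔
      (δ * ‖y‖ ^ 2 < 1 ∧ ⟪y, ν⟫ ≤ h * (1 - δ * ‖y‖ ^ 2)) := by
  have hs0 : 0 < Real.sqrt δ := Real.sqrt_pos.mpr hδ
  have hs2 : Real.sqrt δ ^ 2 = δ := Real.sq_sqrt hδ.le
  have hy0 : 0 ≤ ‖y‖ := norm_nonneg y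
  set a : ℝ := 1 / (2 * δ * h) with ha
  have ha0 : 0 < a := by positivity
  have hRnn : (0:ℝ) ≤ 1 / (4 * δ ^ 2 * h ^ 2) + 1 / δ := by positivity
  have hdist : dist y (-a • ν) = ‖y + a • ν‖ := by
    rw [dist_eq_norm, neg_smul, sub_neg_eq_add]
  have hnsq : ‖y + a • ν‖ ^ 2 = ‖y‖ ^ 2 + 2 * (a * ⟪y, ν⟫) + a ^ 2 := by
    rw [norm_add_sq_real, real_inner_smul_right, norm_smul, hν]
    simp [abs_of_pos ha0]
  constructor
  · rintro ⟨h1, h2⟩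
    rw [Metric.mem_ball, dist_zero_right] at h1
    rw [Metric.mem_closedBall, hdist] at h2
    have h1' : ‖y‖ * Real.sqrt δ < 1 := by
      rw [inv_eq_one_div, lt_div_iff₀ hs0] at h1
      exact h1
    have hq : ‖y + a • ν‖ ^ 2 ≤ 1 / (4 * δ ^ 2 * h ^ 2) + 1 / δ := by
      calc ‖y + a • ν‖ ^ 2 ≤ Real.sqrt (1 / (4 * δ ^ 2 * h ^ 2) + 1 / δ) ^ 2 := by
            apply pow_le_pow_left₀ (norm_nonneg _) h2
        _ = 1 / (4 * δ ^ 2 * h ^ 2) + 1 / δ := Real.sq_sqrt hRnn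
    rw [hnsq] at hq
    have ha2 : a ^ 2 = 1 / (4 * δ ^ 2 * h ^ 2) := by
      rw [ha]; field_simp; ring
    have hδy : δ * ‖y‖ ^ 2 = (‖y‖ * Real.sqrt δ) ^ 2 := by rw [mul_pow, hs2]; ring
    have h1'' : (‖y‖ * Real.sqrt δ) ^ 2 < 1 := by
      nlinarith [mul_nonneg hy0 hs0.le]
    constructor
    · linarith [hδy ▸ h1'']
    · have hq2 : ‖y‖ ^ 2 + 2 * (a * ⟪y, ν⟫) ≤ 1 / δ := by linarith
      have hmul := mul_le_mul_of_nonneg_left hq2 (show (0:ℝ) ≤ δ * h by positivity)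
      have e1 : δ * h * (‖y‖ ^ 2 + 2 * (a * ⟪y, ν⟫)) = δ * h * ‖y‖ ^ 2 + ⟪y, ν⟫ := by
        rw [ha]; field_simp
      have e2 : δ * h * (1 / δ) = h := by field_simp
      nlinarith [hmul, e1, e2]
  · rintro ⟨h1, h2⟩
    constructor
    · rw [Metric.mem_ball, dist_zero_right]
      rw [inv_eq_one_div, lt_div_iff₀ hs0]
      nlinarith [sq_nonneg (‖y‖ * Real.sqrt δ - 1)]
    · rw [Metric.mem_closedBall, hdist]
      rw [show Real.sqrt (1 / (4 * δ ^ 2 * h ^ 2) + 1 / δ)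
          = Real.sqrt (1 / (4 * δ ^ 2 * h ^ 2) + 1 / δ) from rfl]
      have : ‖y + a • ν‖ ^ 2 ≤ 1 / (4 * δ ^ 2 * h ^ 2) + 1 / δ := by
        rw [hnsq]
        have ha2 : a ^ 2 = 1 / (4 * δ ^ 2 * h ^ 2) := by
          rw [ha]; field_simp; ring
        have hmul := mul_le_mul_of_nonneg_left h2 (show (0:ℝ) ≤ 2 * a by positivity)
        have e3 : 2 * a * (h * (1 - δ * ‖y‖ ^ 2)) = 1 / δ - ‖y‖ ^ 2 := by
          rw [ha]; field_simp
        have e4 : 2 * a * ⟪y, ν⟫ = 2 * (a * ⟪y, ν⟫) := by ring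
        linarith [e3 ▸ e4 ▸ hmul]
      calc ‖y + a • ν‖ = Real.sqrt (‖y + a • ν‖ ^ 2) := by
            rw [Real.sqrt_sq (norm_nonneg _)]
        _ ≤ Real.sqrt (1 / (4 * δ ^ 2 * h ^ 2) + 1 / δ) := Real.sqrt_le_sqrt this

/-- The image under `Φ_δ` of the half-space `{x : ⟨x, ν⟩ ≤ h}` equals the intersection of
the open ball of radius `δ^{-1/2}` centered at the origin with the closed ball of radius
`√(1/(4δ²h²) + 1/δ)` centered at `-(1/(2δh)) • ν`. -/
theorem stmt4 (d : ℕ) (δ h : ℝ) (hδ : 0 < δ) (hh : 0 < h)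
    (ν : EuclideanSpace ℝ (Fin d)) (hν : ‖ν‖ = 1) :
    Phi δ '' {x : EuclideanSpace ℝ (Fin d) | ⟪x, ν⟫ ≤ h} =
      Metric.ball 0 ((Real.sqrt δ)⁻¹) ∩
        Metric.closedBall (-(1 / (2 * δ * h)) • ν)
          (Real.sqrt (1 / (4 * δ ^ 2 * h ^ 2) + 1 / δ)) := by
  ext y
  rw [mem_balls_iff d δ h hδ hh ν y hν]
  simp only [Set.mem_image, Set.mem_setOf_eq]
  constructor
  · rintro ⟨x, hx, rfl⟩
    set p := phi δ ‖x‖ with hp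
    have hppos : 0 < p := phi_pos δ ‖x‖
    have hroot := phi_root δ ‖x‖ hδ
    have hny : ‖Phi δ x‖ = p * ‖x‖ := by
      rw [Phi, norm_smul, Real.norm_eq_abs, abs_of_pos hppos]
    have hkey : 1 - δ * ‖Phi δ x‖ ^ 2 = p := by
      rw [hny]; nlinarith
    have hinner : ⟪Phi δ x, ν⟫ = p * ⟪x, ν⟫ := by
      rw [Phi, real_inner_smul_left]
    constructor
    · nlinarith
    · rw [hinner, hkey]
      nlinarith
  · rintro ⟨h1, h2⟩
    set c : ℝ := 1 - δ * ‖y‖ ^ 2 with hc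
    have hc0 : 0 < c := by rw [hc]; linarith
    refine ⟨c⁻¹ • y, ?_, ?_⟩
    · rw [real_inner_smul_left]
      rw [inv_mul_le_iff₀ hc0] at *
      nlinarith
    · have hnx : ‖c⁻¹ • y‖ = c⁻¹ * ‖y‖ := by
        rw [norm_smul, Real.norm_eq_abs, abs_of_pos (inv_pos.mpr hc0)]
      have hcphi : c = phi δ ‖c⁻¹ • y‖ := by
        apply phi_unique δ _ c hδ hc0
        rw [hnx]
        field_simp
        nlinarith
      rw [Phi, ← hcphi, smul_smul, mul_inv_cancel₀ hc0.ne', one_smul]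
end

section
/- Let δ ∈ (0, 1/2), ε ∈ (0, 1/2), and let r ≥ 0 satisfy 2δr² ≤ 1/2. Then (1−ε)·φ_δ((1−ε)r) ≤ (1 − ε/2)·φ_δ(r). -/
/-- Let `δ, ε ∈ (0, 1/2)` and `r ≥ 0` with `2δr² ≤ 1/2`. Then
`(1-ε)·φ_δ((1-ε)r) ≤ (1-ε/2)·φ_δ(r)`. -/
theorem stmt5 (δ ε r : ℝ) (hδ : 0 < δ) (hδ2 : δ < 1 / 2)
    (hε : 0 < ε) (hε2 : ε < 1 / 2) (hr : 0 ≤ r) (h2 : 2 * δ * r ^ 2 ≤ 1 / 2) :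
    (1 - ε) * phi δ ((1 - ε) * r) ≤ (1 - ε / 2) * phi δ r := by
  have hx : (0:ℝ) ≤ 1 + 4 * δ * ((1 - ε) * r) ^ 2 := by nlinarith [sq_nonneg ((1-ε)*r)]
  have hy : (0:ℝ) ≤ 1 + 4 * δ * r ^ 2 := by nlinarith [sq_nonneg r]
  set a := Real.sqrt (1 + 4 * δ * r ^ 2) with ha
  set b := Real.sqrt (1 + 4 * δ * ((1 - ε) * r) ^ 2) with hb
  have hdr : 0 ≤ δ * r ^ 2 := mul_nonneg hδ.le (sq_nonneg r)
  have ha1 : 1 ≤ a := by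
    have h := Real.sqrt_le_sqrt (show (1:ℝ) ≤ 1 + 4 * δ * r ^ 2 by linarith)
    rwa [Real.sqrt_one] at h
  have hb1 : 1 ≤ b := by
    have h := Real.sqrt_le_sqrt (show (1:ℝ) ≤ 1 + 4 * δ * ((1 - ε) * r) ^ 2 by nlinarith [sq_nonneg ((1-ε)*r)])
    rwa [Real.sqrt_one] at h
  have hba : b ≤ a := Real.sqrt_le_sqrt (by nlinarith [mul_nonneg (mul_nonneg hε.le (by linarith : (0:ℝ) ≤ 2 - ε)) (mul_nonneg hδ.le (sq_nonneg r))])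
  have ha2 : a ^ 2 = 1 + 4 * δ * r ^ 2 := Real.sq_sqrt hy
  have hb2 : b ^ 2 = 1 + 4 * δ * ((1 - ε) * r) ^ 2 := Real.sq_sqrt hx
  have h4 : 4 * δ * r ^ 2 ≤ 1 := by linarith
  have hsum : 2 ≤ a + b := by linarith
  have hab : a - b ≤ ε := by
    nlinarith [mul_nonneg hε.le (by linarith : (0:ℝ) ≤ 1 - 4 * δ * r ^ 2),
      mul_nonneg (mul_nonneg hε.le hε.le) hdr]
  unfold phi
  rw [mul_div_assoc', mul_div_assoc', div_le_div_iff₀ (by linarith) (by linarith)]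
  nlinarith [mul_nonneg hε.le (by linarith : (0:ℝ) ≤ a - b),
    mul_nonneg hε.le (by linarith : (0:ℝ) ≤ a - 1)]
end

section
/- Let ε ∈ (0, 1/2), R > 0, and let K ⊆ ℝ^d be a convex body with 0 ∈ K ⊆ d²B. Let x ∈ ∂K, let ν be an outer unit normal to K at x, and suppose K is contained in the closed ball of radius R centered at x − Rν. If y ∈ K satisfies ⟨y, ν⟩ ≥ (1−ε)⟨x, ν⟩, then |y − x| ≤ √(2R) · d · √ε. -/
open scoped RealInnerProductSpace

/-- Let `ε ∈ (0,1/2)`, `R > 0`, and `K ⊆ ℝ^d` a convex body with `0 ∈ K ⊆ d²B`. Let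
`x ∈ ∂K`, `ν` an outer unit normal to `K` at `x`, and assume `K` is contained in the
closed ball of radius `R` centered at `x − Rν`. If `y ∈ K` satisfies
`⟨y, ν⟩ ≥ (1−ε)⟨x, ν⟩`, then `|y − x| ≤ √(2R)·d·√ε`. -/
theorem stmt13 (d : ℕ) (ε R : ℝ) (hε : 0 < ε) (hε2 : ε < 1 / 2) (hR : 0 < R)
    (K : Set (EuclideanSpace ℝ (Fin d)))
    (hKcomp : IsCompact K) (hKconv : Convex ℝ K) (hKint : (interior K).Nonempty)
    (h0 : (0 : EuclideanSpace ℝ (Fin d)) ∈ K)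
    (hKB : K ⊆ Metric.closedBall 0 ((d : ℝ) ^ 2))
    (x ν : EuclideanSpace ℝ (Fin d)) (hx : x ∈ frontier K)
    (hνu : ‖ν‖ = 1) (hν : ∀ y ∈ K, ⟪y, ν⟫ ≤ ⟪x, ν⟫)
    (hKQ : K ⊆ Metric.closedBall (x - R • ν) R)
    (y : EuclideanSpace ℝ (Fin d)) (hy : y ∈ K)
    (hcap : (1 - ε) * ⟪x, ν⟫ ≤ ⟪y, ν⟫) :
    ‖y - x‖ ≤ Real.sqrt (2 * R) * d * Real.sqrt ε := by
  have hxK : x ∈ K := hKcomp.isClosed.frontier_subset hx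
  have hxν0 : (0 : ℝ) ≤ ⟪x, ν⟫ := by
    have := hν 0 h0
    simpa using this
  have hxνd : ⟪x, ν⟫ ≤ (d : ℝ) ^ 2 := by
    have hxn : ‖x‖ ≤ (d : ℝ) ^ 2 := by simpa using hKB hxK
    calc ⟪x, ν⟫ ≤ ‖x‖ * ‖ν‖ := real_inner_le_norm x ν
      _ = ‖x‖ := by rw [hνu, mul_one]
      _ ≤ (d : ℝ) ^ 2 := hxn
  -- ball condition
  have hball : ‖y - (x - R • ν)‖ ≤ R := by
    have := hKQ hy
    rwa [Metric.mem_closedBall, dist_eq_norm] at this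
  have hball2 : ‖y - (x - R • ν)‖ ^ 2 ≤ R ^ 2 := by
    have h1 : (0:ℝ) ≤ ‖y - (x - R • ν)‖ := norm_nonneg _
    nlinarith
  have hexp : ‖y - (x - R • ν)‖ ^ 2
      = ‖y - x‖ ^ 2 + 2 * (R * ⟪y - x, ν⟫) + R ^ 2 := by
    have : y - (x - R • ν) = (y - x) + R • ν := by abel
    rw [this, norm_add_sq_real, real_inner_smul_right, norm_smul]
    simp [hνu, abs_of_pos hR]
  have hdiff : ⟪y - x, ν⟫ = ⟪y, ν⟫ - ⟪x, ν⟫ := inner_sub_left _ _ _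
  have hkey : ‖y - x‖ ^ 2 ≤ 2 * R * (ε * ((d : ℝ) ^ 2)) := by
    have h2 : ⟪x, ν⟫ - ⟪y, ν⟫ ≤ ε * ⟪x, ν⟫ := by nlinarith
    nlinarith [hε.le, mul_le_mul_of_nonneg_left hxνd hε.le]
  have hrhs : Real.sqrt (2 * R) * d * Real.sqrt ε
      = Real.sqrt (2 * R * (ε * ((d : ℝ) ^ 2))) := by
    rw [Real.sqrt_mul (by positivity : (0:ℝ) ≤ 2*R),
      Real.sqrt_mul hε.le, Real.sqrt_sq (by positivity : (0:ℝ) ≤ (d:ℝ))]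
    ring
  rw [hrhs]
  calc ‖y - x‖ = Real.sqrt (‖y - x‖ ^ 2) := (Real.sqrt_sq (norm_nonneg _)).symm
    _ ≤ _ := Real.sqrt_le_sqrt hkey
end

section
/- Let ε, ρ ∈ (0, 1/2) and let K ⊆ ℝ^d be a convex body with (1/2)B ⊆ K ⊆ d²B. Let x, x', y ∈ ∂K, and let ν and ν' be outer unit normals to K at x and x' respectively. Assume |x − x'|² + |ν − ν'|² ≤ ρ² and ⟨y, ν⟩ ≥ (1 − ε/2)⟨x, ν⟩. Then ⟨y, ν'⟩ ≥ (1 − ε/2 − 2ρ(ρ + εd² + |y − x|))·⟨x', ν'⟩. -/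
open scoped RealInnerProductSpace

set_option maxHeartbeats 1000000 in
/-- Let `ε, ρ ∈ (0,1/2)` and `K ⊆ ℝ^d` a convex body with `(1/2)B ⊆ K ⊆ d²B`. Let
`x, x', y ∈ ∂K` and `ν, ν'` outer unit normals at `x, x'`. If
`|x − x'|² + |ν − ν'|² ≤ ρ²` and `⟨y, ν⟩ ≥ (1 − ε/2)⟨x, ν⟩`, then
`⟨y, ν'⟩ ≥ (1 − ε/2 − 2ρ(ρ + εd² + |y − x|))·⟨x', ν'⟩`. -/
theorem stmt14 (d : ℕ) (ε ρ : ℝ) (hε : 0 < ε) (hε2 : ε < 1 / 2)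
    (hρ : 0 < ρ) (hρ2 : ρ < 1 / 2)
    (K : Set (EuclideanSpace ℝ (Fin d)))
    (hKcomp : IsCompact K) (hKconv : Convex ℝ K) (hKint : (interior K).Nonempty)
    (hBK : Metric.closedBall 0 (1 / 2) ⊆ K)
    (hKB : K ⊆ Metric.closedBall 0 ((d : ℝ) ^ 2))
    (x x' y ν ν' : EuclideanSpace ℝ (Fin d))
    (hx : x ∈ frontier K) (hx' : x' ∈ frontier K) (hy : y ∈ frontier K)
    (hνu : ‖ν‖ = 1) (hν : ∀ z ∈ K, ⟪z, ν⟫ ≤ ⟪x, ν⟫)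
    (hν'u : ‖ν'‖ = 1) (hν' : ∀ z ∈ K, ⟪z, ν'⟫ ≤ ⟪x', ν'⟫)
    (hclose : ‖x - x'‖ ^ 2 + ‖ν - ν'‖ ^ 2 ≤ ρ ^ 2)
    (hcap : (1 - ε / 2) * ⟪x, ν⟫ ≤ ⟪y, ν⟫) :
    (1 - ε / 2 - 2 * ρ * (ρ + ε * (d : ℝ) ^ 2 + ‖y - x‖)) * ⟪x', ν'⟫ ≤ ⟪y, ν'⟫ := by
  have hKcl : IsClosed K := hKcomp.isClosed
  have hxK : x ∈ K := hKcl.frontier_subset hx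
  have hx'K : x' ∈ K := hKcl.frontier_subset hx'
  have hyK : y ∈ K := hKcl.frontier_subset hy
  -- h' ≥ 1/2
  have hmem : ((1/2 : ℝ) • ν') ∈ K := by
    apply hBK
    simp [Metric.mem_closedBall, norm_smul, hν'u]
  have hh' : (1:ℝ)/2 ≤ ⟪x', ν'⟫ := by
    have := hν' _ hmem
    rw [real_inner_smul_left, real_inner_self_eq_norm_sq, hν'u] at this
    linarith
  -- distance bounds
  have ha : ‖x - x'‖ ≤ ρ := by
    nlinarith [norm_nonneg (x - x'), sq_nonneg (‖ν - ν'‖), norm_nonneg (x - x')]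
  have hb : ‖ν - ν'‖ ≤ ρ := by
    nlinarith [norm_nonneg (ν - ν'), sq_nonneg (‖x - x'‖)]
  have hxnorm : ‖x‖ ≤ (d : ℝ) ^ 2 := by
    have := hKB hxK
    rwa [Metric.mem_closedBall, dist_zero_right] at this
  -- h - h' ≤ d² ρ
  have e1 : ⟪x, ν'⟫ ≤ ⟪x', ν'⟫ := hν' x hxK
  have e3 : |⟪x, ν - ν'⟫| ≤ ‖x‖ * ‖ν - ν'‖ := abs_real_inner_le_norm x (ν - ν')
  have e3' : ⟪x, ν - ν'⟫ = ⟪x, ν⟫ - ⟪x, ν'⟫ := by rw [inner_sub_right]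
  have hhh : ⟪x, ν⟫ - ⟪x', ν'⟫ ≤ (d : ℝ)^2 * ρ := by
    have h1 : ⟪x, ν⟫ - ⟪x', ν'⟫ ≤ ⟪x, ν - ν'⟫ := by rw [e3']; linarith
    have h2 : ⟪x, ν - ν'⟫ ≤ ‖x‖ * ‖ν - ν'‖ := (abs_le.mp e3).2
    have h3 : ‖x‖ * ‖ν - ν'‖ ≤ (d : ℝ)^2 * ρ := by
      apply mul_le_mul hxnorm hb (norm_nonneg _)
      positivity
    linarith
  -- main identity
  have e2 : ⟪x', ν⟫ ≤ ⟪x, ν⟫ := hν x' hx'K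
  have hid : ⟪y, ν'⟫ = ⟪y, ν⟫ + (⟪x', ν'⟫ - ⟪x', ν⟫) + ⟪y - x', ν' - ν⟫ := by
    simp [inner_sub_left, inner_sub_right]; ring
  have e4 : |⟪y - x', ν' - ν⟫| ≤ ‖y - x'‖ * ‖ν' - ν‖ := abs_real_inner_le_norm _ _
  have e5 : ‖y - x'‖ ≤ ‖y - x‖ + ‖x - x'‖ := by
    have : y - x' = (y - x) + (x - x') := by abel
    rw [this]; exact norm_add_le _ _
  have e6 : ‖ν' - ν‖ = ‖ν - ν'‖ := norm_sub_rev _ _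
  have e4' : -(‖y - x'‖ * ‖ν - ν'‖) ≤ ⟪y - x', ν' - ν⟫ := by
    have := (abs_le.mp e4).1
    rw [e6] at this
    linarith
  -- lower bound on ⟪y, ν'⟫
  have key : ⟪x', ν'⟫ - (ε/2) * ⟪x, ν⟫ - (‖y - x‖ + ρ) * ρ ≤ ⟪y, ν'⟫ := by
    have h4 : -((‖y - x‖ + ρ) * ρ) ≤ ⟪y - x', ν' - ν⟫ := by
      have hb0 : (0:ℝ) ≤ ‖ν - ν'‖ := norm_nonneg _
      have : ‖y - x'‖ * ‖ν - ν'‖ ≤ (‖y - x‖ + ρ) * ρ := by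
        apply mul_le_mul (by linarith) hb hb0 (by positivity)
      linarith
    rw [hid]
    nlinarith
  -- finish
  have hyx : (0:ℝ) ≤ ‖y - x‖ := norm_nonneg _
  nlinarith [mul_nonneg (mul_nonneg hρ.le hε.le) (sq_nonneg (d:ℝ)),
    mul_nonneg hρ.le hyx,
    mul_le_mul_of_nonneg_left hhh (by linarith : (0:ℝ) ≤ ε/2),
    mul_nonneg (mul_nonneg hρ.le hρ.le) (by linarith : (0:ℝ) ≤ ⟪x', ν'⟫ - 1/2)]
end

section
/- Let (U, μ) be a probability space and let S_1, …, S_N be measurable subsets of U such that μ(S_i) ≥ θ for all i = 1, …, N, where θ > 0. Then there exists a finite set Y ⊆ U of cardinality at most ⌈θ^{-1} log(Nθ)⌉ + θ^{-1} such that Y ∩ S_i ≠ ∅ for every i = 1, …, N. -/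
open MeasureTheory Finset
open scoped Classical

lemma avg_lemma' {U : Type*} [MeasurableSpace U] (μ : Measure U)
    [IsProbabilityMeasure μ] {N : ℕ} (S : Fin N → Set U)
    (hmeas : ∀ i, MeasurableSet (S i)) {θ : ℝ}
    (hS : ∀ i, ENNReal.ofReal θ ≤ μ (S i)) (T : Finset (Fin N)) :
    ∃ x : U, θ * T.card ≤ ((T.filter (fun i => x ∈ S i)).card : ℝ) := by
  classical
  set f : U → ℝ := fun x => ∑ i ∈ T, (S i).indicator (fun _ => (1:ℝ)) x with hf
  have hint : Integrable f μ :=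
    integrable_finset_sum _ (fun i _ => (integrable_const (1:ℝ)).indicator (hmeas i))
  obtain ⟨x, hx⟩ := exists_integral_le hint
  refine ⟨x, ?_⟩
  have h1 : θ * T.card ≤ ∫ a, f a ∂μ := by
    rw [hf, integral_finset_sum _ (fun i _ => (integrable_const (1:ℝ)).indicator (hmeas i))]
    have h2 : ∀ i ∈ T, θ ≤ ∫ a, (S i).indicator (fun _ => (1:ℝ)) a ∂μ := by
      intro i _
      rw [integral_indicator_const _ (hmeas i)]
      simp only [smul_eq_mul, mul_one]
      exact (ENNReal.ofReal_le_iff_le_toReal (measure_lt_top μ _).ne).mp (hS i)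
    calc θ * T.card = ∑ _i ∈ T, θ := by rw [Finset.sum_const, nsmul_eq_mul, mul_comm]
    _ ≤ _ := Finset.sum_le_sum h2
  refine h1.trans (hx.trans (le_of_eq ?_))
  rw [hf]
  simp only [Set.indicator_apply]
  rw [Finset.sum_boole]

lemma greedy_lemma {U : Type*} [MeasurableSpace U] (μ : Measure U)
    [IsProbabilityMeasure μ] {N : ℕ} (S : Fin N → Set U)
    (hmeas : ∀ i, MeasurableSet (S i)) {θ : ℝ} (hθ : 0 < θ) (hθ1 : θ ≤ 1)
    (hS : ∀ i, ENNReal.ofReal θ ≤ μ (S i)) (m : ℕ) :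
    ∃ Y : Finset U, Y.card ≤ m ∧
      ((Finset.univ.filter (fun i => ∀ y ∈ Y, y ∉ S i)).card : ℝ) ≤ N * (1-θ)^m := by
  classical
  induction m with
  | zero =>
    refine ⟨∅, le_refl _, ?_⟩
    simp only [pow_zero, mul_one]
    have h := (Finset.card_filter_le Finset.univ
      (fun i : Fin N => ∀ y ∈ (∅ : Finset U), y ∉ S i)).trans
      (le_of_eq (by simp : (Finset.univ : Finset (Fin N)).card = N))
    exact_mod_cast h
  | succ m ih =>
    obtain ⟨Y, hYc, hYb⟩ := ih
    set T := Finset.univ.filter (fun i => ∀ y ∈ Y, y ∉ S i) with hT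
    obtain ⟨x, hx⟩ := avg_lemma' μ S hmeas hS T
    refine ⟨insert x Y, (Finset.card_insert_le _ _).trans (by omega), ?_⟩
    have hset : Finset.univ.filter (fun i => ∀ y ∈ insert x Y, y ∉ S i)
        = T.filter (fun i => x ∉ S i) := by
      ext i
      simp only [hT, Finset.mem_filter, Finset.mem_univ, true_and, Finset.mem_insert]
      constructor
      · intro h
        exact ⟨fun y hy => h y (Or.inr hy), h x (Or.inl rfl)⟩
      · rintro ⟨h1, h2⟩ y (rfl | hy)
        · exact h2
        · exact h1 y hy
    rw [hset]
    have hsplit : (T.filter (fun i => x ∈ S i)).card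
        + (T.filter (fun i => x ∉ S i)).card = T.card :=
      Finset.card_filter_add_card_filter_not _
    have h3 : ((T.filter (fun i => x ∉ S i)).card : ℝ)
        = (T.card : ℝ) - ((T.filter (fun i => x ∈ S i)).card : ℝ) := by
      push_cast [← hsplit]; ring
    have h1θ : (0:ℝ) ≤ 1 - θ := by linarith
    have h4 := mul_le_mul_of_nonneg_left hYb h1θ
    rw [pow_succ]
    nlinarith

/-- Rogers' trick: if `S_1, …, S_N` are measurable subsets of a probability space with
`μ(S_i) ≥ θ > 0` for each `i`, then there is a set `Y` of cardinality at most
`⌈θ⁻¹ log(Nθ)⌉ + θ⁻¹` intersecting every `S_i`. Here `⌈z⌉` is the least nonnegative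
integer `≥ z`. -/
theorem stmt15 {U : Type*} [MeasurableSpace U] (μ : Measure U)
    [IsProbabilityMeasure μ] (N : ℕ) (S : Fin N → Set U)
    (hmeas : ∀ i, MeasurableSet (S i)) (θ : ℝ) (hθ : 0 < θ)
    (hS : ∀ i, ENNReal.ofReal θ ≤ μ (S i)) :
    ∃ Y : Finset U,
      (Y.card : ℝ) ≤ (⌈θ⁻¹ * Real.log ((N : ℝ) * θ)⌉₊ : ℝ) + θ⁻¹ ∧
      ∀ i, ∃ y ∈ Y, y ∈ S i := by
  classical
  rcases Nat.eq_zero_or_pos N with hN | hN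
  · subst hN
    refine ⟨∅, ?_, fun i => i.elim0⟩
    simp only [Finset.card_empty, Nat.cast_zero]
    positivity
  have hθ1 : θ ≤ 1 := by
    have := (hS ⟨0, hN⟩).trans (prob_le_one (μ := μ))
    exact ENNReal.ofReal_le_one.mp this
  set m := ⌈θ⁻¹ * Real.log ((N : ℝ) * θ)⌉₊ with hm
  obtain ⟨Y, hYc, hYb⟩ := greedy_lemma μ S hmeas hθ hθ1 hS m
  set T := Finset.univ.filter (fun i => ∀ y ∈ Y, y ∉ S i) with hT
  have hNpos : (0:ℝ) < N := by exact_mod_cast hN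
  have hTb : (T.card : ℝ) ≤ θ⁻¹ := by
    rcases le_or_gt ((N:ℝ) * θ) 1 with hcase | hcase
    · have h2 : (1-θ:ℝ)^m ≤ 1 := pow_le_one₀ (by linarith) (by linarith)
      have h3 : (N:ℝ) ≤ θ⁻¹ := by
        rw [← one_div, le_div_iff₀ hθ]; linarith
      have h4 : (N:ℝ) * (1-θ)^m ≤ (N:ℝ) * 1 := mul_le_mul_of_nonneg_left h2 hNpos.le
      linarith
    · have hm1 : θ⁻¹ * Real.log ((N:ℝ) * θ) ≤ m := Nat.le_ceil _
      have hm2 : Real.log ((N:ℝ) * θ) ≤ θ * m := by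
        have := mul_le_mul_of_nonneg_left hm1 hθ.le
        rwa [← mul_assoc, mul_inv_cancel₀ hθ.ne', one_mul] at this
      have hexp : (1-θ:ℝ)^m ≤ Real.exp (-(θ * m)) := by
        calc (1-θ:ℝ)^m ≤ (Real.exp (-θ))^m := by
              apply pow_le_pow_left₀ (by linarith)
              linarith [Real.add_one_le_exp (-θ)]
        _ = Real.exp (-(θ * m)) := by
              rw [← Real.exp_nat_mul]; ring_nf
      have hexp2 : Real.exp (-(θ * m)) ≤ ((N:ℝ) * θ)⁻¹ := by
        rw [← Real.exp_log (by positivity : (0:ℝ) < ((N:ℝ)*θ)⁻¹), Real.log_inv]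
        exact Real.exp_le_exp.mpr (by linarith)
      have h5 : (N:ℝ) * (1-θ)^m ≤ (N:ℝ) * ((N:ℝ)*θ)⁻¹ :=
        mul_le_mul_of_nonneg_left (hexp.trans hexp2) hNpos.le
      have heq : (N:ℝ) * ((N:ℝ)*θ)⁻¹ = θ⁻¹ := by
        field_simp
      linarith [hYb]
  have hne : ∀ i, (S i).Nonempty := by
    intro i
    apply nonempty_of_measure_ne_zero (μ := μ)
    intro h
    have h2 := hS i
    rw [h, nonpos_iff_eq_zero, ENNReal.ofReal_eq_zero] at h2
    linarith
  choose g hg using hne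
  refine ⟨Y ∪ T.image g, ?_, ?_⟩
  · have hc : (Y ∪ T.image g).card ≤ Y.card + T.card :=
      (Finset.card_union_le _ _).trans (by
        gcongr
        exact Finset.card_image_le)
    have : ((Y ∪ T.image g).card : ℝ) ≤ (Y.card : ℝ) + (T.card : ℝ) := by exact_mod_cast hc
    have hYcr : (Y.card : ℝ) ≤ m := by exact_mod_cast hYc
    linarith
  · intro i
    by_cases hi : i ∈ T
    · exact ⟨g i, Finset.mem_union_right _ (Finset.mem_image_of_mem g hi), hg i⟩
    · rw [hT, Finset.mem_filter] at hi
      push_neg at hi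
      obtain ⟨y, hy, hyS⟩ := hi (Finset.mem_univ i)
      exact ⟨y, Finset.mem_union_left _ hy, hyS⟩
end
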